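/- For integers n ≥ 1 and a ≥ 2, let ℓ = ⌈log_a n⌉. There exists an injective labelling f assigning to each element of [n] a word of length ℓ over the alphabet {0, 1, …, a} (of size a+1) such that in every digit position d ∈ [ℓ], each letter of the alphabet is used at most ⌈n/a⌉ times, i.e., for every d and every letter c, |{i ∈ [n] : the d-th letter of f(i) equals c}| ≤ ⌈n/a⌉. In particular, this labelling is a separating system: for any distinct i, j ∈ [n] there exists a digit position d ∈ [ℓ] where the labels of i and j differ. -/
import Mathlib


/-- A directed graph (given by its edge relation) is a DAG if it has no directed cycles. -/
def IsDAG {V : Type*} (E : V → V → Prop) : Prop :=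
  ∀ v : V, ¬ Relation.TransGen E v v

/-- The set of parents of `v` in the directed graph `E`. -/
def parents {V : Type*} (E : V → V → Prop) (v : V) : Set V := {u | E u v}

/-- An arc `x → y` of `E` is a covered edge if `Pa(x) = Pa(y) \ {x}`. -/
def CoveredEdge {V : Type*} (E : V → V → Prop) (x y : V) : Prop :=
  E x y ∧ parents E x = parents E y \ {x}

/-- The set of covered edges of `E`, as ordered pairs. -/
def coveredEdges {V : Type*} (E : V → V → Prop) : Set (V × V) :=
  {p | CoveredEdge E p.1 p.2}

/-- The skeleton (undirected adjacency) of a directed graph. -/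
def Skel {V : Type*} (E : V → V → Prop) (u v : V) : Prop := E u v ∨ E v u

/-- `(u, v, w)` is a v-structure: `u → v ← w` with `u ≠ w` non-adjacent. -/
def VStruct {V : Type*} (E : V → V → Prop) (u v w : V) : Prop :=
  u ≠ w ∧ E u v ∧ E w v ∧ ¬ Skel E u w

/-- Two directed graphs are Markov equivalent: same skeleton and same v-structures. -/
def MarkovEquiv {V : Type*} (E E' : V → V → Prop) : Prop :=
  (∀ u v, Skel E u v ↔ Skel E' u v) ∧ (∀ u v w, VStruct E u v w ↔ VStruct E' u v w)

/-- Minimum vertex cover number of a set of (directed) edges. -/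
noncomputable def mvc {V : Type*} [Fintype V] (F : Set (V × V)) : ℕ :=
  sInf {n | ∃ S : Finset V, (∀ p ∈ F, p.1 ∈ S ∨ p.2 ∈ S) ∧ S.card = n}

/-- The graph obtained from `E` by reversing the arc `x → y` to `y → x`. -/
def reverseEdge {V : Type*} (E : V → V → Prop) (x y : V) : V → V → Prop :=
  fun u v => (E u v ∧ ¬(u = x ∧ v = y)) ∨ (u = y ∧ v = x)

/-- A moral DAG is a DAG with no v-structures. -/
def Moral {V : Type*} (E : V → V → Prop) : Prop := ∀ u v w, ¬ VStruct E u v w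

/-- `w` is a direct child of `v`: `v → w` is an arc and there is no directed
path from `v` to `w` of length at least 2 (i.e. through an intermediate vertex). -/
def DirectChild {V : Type*} (E : V → V → Prop) (v w : V) : Prop :=
  E v w ∧ ∀ z : V, ¬ (Relation.TransGen E v z ∧ Relation.TransGen E z w)



lemma digits_inj_aux (a : ℕ) (ha : 2 ≤ a) : ∀ (k x y : ℕ), x < a ^ k → y < a ^ k →
    (∀ t < k, x / a ^ t % a = y / a ^ t % a) → x = y := by
  intro k
  induction k with
  | zero => intro x y hx hy _; simp [Nat.lt_one_iff] at hx hy; omega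
  | succ k ih =>
    intro x y hx hy h
    have h0 := h 0 (by omega)
    simp at h0
    have hxa : x / a < a ^ k := by
      rw [Nat.div_lt_iff_lt_mul (by omega)]
      rw [pow_succ] at hx; exact hx
    have hya : y / a < a ^ k := by
      rw [Nat.div_lt_iff_lt_mul (by omega)]
      rw [pow_succ] at hy; exact hy
    have key := ih (x / a) (y / a) hxa hya (fun t ht => by
      have ht1 := h (t + 1) (by omega)
      rw [Nat.div_div_eq_div_mul, Nat.div_div_eq_div_mul, ← pow_succ'] at *
      exact ht1)
    rw [← Nat.div_add_mod x a, ← Nat.div_add_mod y a, key, h0]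


/-- Labelling scheme (Lemma 1 of Shanmugam et al.): for `n ≥ 1` and `a ≥ 2` there is an
injective labelling of `[n]` by words of length `ℓ = ⌈log_a n⌉` over the alphabet
`{0, 1, …, a}` such that in every digit position each letter is used at most `⌈n / a⌉`
times; in particular the labelling is a separating system. -/
theorem labelling_scheme (n a : ℕ) (hn : 1 ≤ n) (ha : 2 ≤ a) :
    ∃ f : Fin n → (Fin (Nat.clog a n) → Fin (a + 1)),
      Function.Injective f ∧
      (∀ (d : Fin (Nat.clog a n)) (c : Fin (a + 1)),
        (Finset.univ.filter (fun i : Fin n => f i d = c)).card ≤ (n + a - 1) / a) ∧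
      (∀ i j : Fin n, i ≠ j → ∃ d : Fin (Nat.clog a n), f i d ≠ f j d) := by
  set ℓ := Nat.clog a n with hℓ
  set m := (n + a - 1) / a with hm
  have ham : 0 < a := by omega
  have hmeq : m = (n - 1) / a + 1 := by
    have h1 : n + a - 1 = (n - 1) + 1 * a := by omega
    rw [hm, h1, Nat.add_mul_div_right _ _ ham]
  have hm1 : 1 ≤ m := hmeq ▸ Nat.succ_le_succ (Nat.zero_le _)
  have hdm1 := Nat.div_add_mod (n - 1) a
  have hmod1 : (n - 1) % a < a := Nat.mod_lt _ ham
  have ham2 : a * m = a * ((n - 1) / a) + a := by rw [hmeq, Nat.mul_add, Nat.mul_one]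
  have hnam : n ≤ a * m := by omega
  have hq : ∀ i : Fin n, (i : ℕ) / m < a + 1 := by
    intro i
    have h1 : (i : ℕ) < a * m := lt_of_lt_of_le i.isLt hnam
    have : (i : ℕ) / m < a := by
      rw [Nat.div_lt_iff_lt_mul (by omega)]
      omega
    omega
  set dig : ℕ → ℕ → ℕ := fun i d => if d = 0 then 0 else i % m / a ^ (d - 1) % a with hdig
  set f : Fin n → Fin ℓ → Fin (a + 1) :=
    fun i d => ⟨(dig (i : ℕ) (d : ℕ) + (i : ℕ) / m) % (a + 1), Nat.mod_lt _ (by omega)⟩ with hf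
  have hfval : ∀ (i : Fin n) (d : Fin ℓ),
      (f i d : ℕ) = (dig (i : ℕ) (d : ℕ) + (i : ℕ) / m) % (a + 1) := fun i d => rfl
  have hinj : Function.Injective f := by
    intro i j hij
    rcases Nat.lt_or_ge n 2 with hn2 | hn2
    · have hi := i.isLt; have hj := j.isLt
      exact Fin.ext (by omega)
    · have hℓpos : 0 < ℓ := Nat.clog_pos (by omega) hn2
      have hpow : n ≤ a ^ ℓ := Nat.le_pow_clog (by omega) n
      have hmpow : m ≤ a ^ (ℓ - 1) := by
        rw [hmeq]
        have : (n - 1) / a < a ^ (ℓ - 1) := by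
          rw [Nat.div_lt_iff_lt_mul ham]
          calc n - 1 < n := by omega
            _ ≤ a ^ ℓ := hpow
            _ = a ^ (ℓ - 1) * a := by rw [← pow_succ]; congr 1; omega
        omega
      have hq0 : (i : ℕ) / m = (j : ℕ) / m := by
        have h0' := congrArg Fin.val (congrFun hij ⟨0, hℓpos⟩)
        rw [hfval, hfval] at h0'
        simp only [hdig, if_pos rfl, Nat.zero_add] at h0'
        rwa [Nat.mod_eq_of_lt (hq i), Nat.mod_eq_of_lt (hq j)] at h0'
      have hdigs : ∀ t < ℓ - 1, (i : ℕ) % m / a ^ t % a = (j : ℕ) % m / a ^ t % a := by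
        intro t ht
        have hd' := congrArg Fin.val (congrFun hij ⟨t + 1, by omega⟩)
        rw [hfval, hfval] at hd'
        simp only [hdig] at hd'
        rw [if_neg (by omega), if_neg (by omega)] at hd'
        simp only [Nat.add_sub_cancel] at hd'
        rw [hq0] at hd'
        have hme : Nat.ModEq (a + 1) ((i : ℕ) % m / a ^ t % a) ((j : ℕ) % m / a ^ t % a) :=
          Nat.ModEq.add_right_cancel' _ hd'
        exact Nat.ModEq.eq_of_lt_of_lt hme
          (lt_of_lt_of_le (Nat.mod_lt _ ham) (by omega))
          (lt_of_lt_of_le (Nat.mod_lt _ ham) (by omega))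
      have hmeq2 : (i : ℕ) % m = (j : ℕ) % m := by
        refine digits_inj_aux a ha (ℓ - 1) _ _ ?_ ?_ hdigs
        · exact lt_of_lt_of_le (Nat.mod_lt _ (by omega)) hmpow
        · exact lt_of_lt_of_le (Nat.mod_lt _ (by omega)) hmpow
      exact Fin.ext (by rw [← Nat.div_add_mod (i : ℕ) m, ← Nat.div_add_mod (j : ℕ) m, hq0, hmeq2])
  refine ⟨f, hinj, ?_, ?_⟩
  · intro d c
    calc (Finset.univ.filter (fun i : Fin n => f i d = c)).card
        ≤ (Finset.range m).card := by
          apply Finset.card_le_card_of_injOn (fun i : Fin n => (i : ℕ) % m)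
          · intro i _
            exact Finset.mem_range.mpr (Nat.mod_lt _ (by omega))
          · intro i hi j hj hmod
            have hmod' : (i : ℕ) % m = (j : ℕ) % m := hmod
            simp only [Finset.mem_coe, Finset.mem_filter] at hi hj
            have hci := congrArg Fin.val hi.2
            have hcj := congrArg Fin.val hj.2
            rw [hfval] at hci hcj
            have hde : dig (i : ℕ) (d : ℕ) = dig (j : ℕ) (d : ℕ) := by
              simp only [hdig]
              split
              · rfl
              · rw [hmod']
            rw [← hcj, hde] at hci
            have hme : Nat.ModEq (a + 1) ((i : ℕ) / m) ((j : ℕ) / m) :=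
              Nat.ModEq.add_left_cancel' _ hci
            have hqe : (i : ℕ) / m = (j : ℕ) / m :=
              Nat.ModEq.eq_of_lt_of_lt hme (hq i) (hq j)
            exact Fin.ext (by
              rw [← Nat.div_add_mod (i : ℕ) m, ← Nat.div_add_mod (j : ℕ) m, hqe, hmod'])
      _ = m := Finset.card_range m
  · intro i j hij
    by_contra hcon
    push_neg at hcon
    exact hij (hinj (funext hcon))
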